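/- Let (X,d) be a metric space, R a finitely semi-recurrent, non-identical relation on X, and T : X → X an R-semi-progressive, R-increasing selfmap which is (d,R;G,(ψ,φ))-contractive for some G ∈ 𝒢 and some pair (ψ,φ) of weak generalized altering functions in F(ℝ₊). If X is (a-o,d)-complete and R is (a-o,d)-almost-selfclosed, then T is a globally strong Picard operator (modulo (d,R)): for each x ∈ X(T,R) the sequence (Tⁿx) converges to a fixed point of T, and any two fixed points z₁, z₂ of T with z₁ R z₂ coincide. -/

import Mathlib

open Filter Topology

namespace Paper

variable {X : Type*} [MetricSpace X]

/-- `A₁(x,y) = d(x,y)`. -/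
noncomputable def A1 (T : X → X) (x y : X) : ℝ := dist x y

/-- `A₂(x,y) = (1/2)[d(x,Tx) + d(y,Ty)]`. -/
noncomputable def A2 (T : X → X) (x y : X) : ℝ := (dist x (T x) + dist y (T y)) / 2

/-- `A₃(x,y) = max{d(x,Tx), d(y,Ty)}`. -/
noncomputable def A3 (T : X → X) (x y : X) : ℝ := max (dist x (T x)) (dist y (T y))

/-- `A₄(x,y) = (1/2)[d(x,Ty) + d(Tx,y)]`. -/
noncomputable def A4 (T : X → X) (x y : X) : ℝ := (dist x (T y) + dist (T x) y) / 2

/-- `B₁(x,y) = diam{x, Tx, y, Ty}`. -/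
noncomputable def B1 (T : X → X) (x y : X) : ℝ := Metric.diam ({x, T x, y, T y} : Set X)

noncomputable def B2 (T : X → X) (x y : X) : ℝ := max (A1 T x y) (A2 T x y)
noncomputable def B3 (T : X → X) (x y : X) : ℝ := max (A1 T x y) (A3 T x y)
noncomputable def B4 (T : X → X) (x y : X) : ℝ := max (A1 T x y) (A4 T x y)
noncomputable def C1 (T : X → X) (x y : X) : ℝ := max (A1 T x y) (max (A2 T x y) (A4 T x y))
noncomputable def C2 (T : X → X) (x y : X) : ℝ := max (A1 T x y) (max (A3 T x y) (A4 T x y))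

/-- The class `𝒢 = {A₁, B₂, B₃, B₄, C₁, C₂}`. -/
noncomputable def calG (T : X → X) : Set (X → X → ℝ) :=
  {A1 T, B2 T, B3 T, B4 T, C1 T, C2 T}

/-- The class `𝒢₁ = {A₁, B₂, B₄, C₁}`. -/
noncomputable def calG1 (T : X → X) : Set (X → X → ℝ) :=
  {A1 T, B2 T, B4 T, C1 T}

/-- `T` is strictly `(d,R;G)`-nonexpansive: `x R̃ y` implies `d(Tx,Ty) < G(x,y)`. -/
def StrictlyNonexpansive (R : X → X → Prop) (T : X → X) (G : X → X → ℝ) : Prop :=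
  ∀ x y, R x y → x ≠ y → dist (T x) (T y) < G x y

/-- `T` is Meir-Keeler `(d,R;G)`-contractive. -/
def MeirKeelerContractive (R : X → X → Prop) (T : X → X) (G : X → X → ℝ) : Prop :=
  StrictlyNonexpansive R T G ∧
  ∀ ε : ℝ, 0 < ε → ∃ δ : ℝ, 0 < δ ∧
    ∀ x y, R x y → x ≠ y → ε < G x y → G x y < ε + δ → dist (T x) (T y) ≤ ε

/-- `φ ∈ F(re)(ℝ₊)`: `φ : ℝ₊ → ℝ₊` with `φ(0) = 0` and `φ(t) < t` for `t > 0`. -/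
def Regressive (φ : ℝ → ℝ) : Prop :=
  φ 0 = 0 ∧ (∀ t, 0 ≤ t → 0 ≤ φ t) ∧ (∀ t, 0 < t → φ t < t)

/-- `φ` is Meir-Keeler admissible. -/
def MKAdmissible (φ : ℝ → ℝ) : Prop :=
  ∀ γ : ℝ, 0 < γ → ∃ β : ℝ, 0 < β ∧ β < γ ∧ ∀ t, γ ≤ t → t < γ + β → φ t ≤ γ

/-- `T` is `(d,R;G,φ)`-contractive. -/
def PhiContractive (R : X → X → Prop) (T : X → X) (G : X → X → ℝ) (φ : ℝ → ℝ) : Prop :=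
  ∀ x y, R x y → x ≠ y → dist (T x) (T y) ≤ φ (G x y)

/-- `(ψ,φ)` is a pair of weak generalized altering functions in `F(ℝ₊)`. -/
def WeakAlteringPair (ψ φ : ℝ → ℝ) : Prop :=
  (∀ s t, 0 ≤ s → s ≤ t → ψ s ≤ ψ t) ∧
  (∀ t, 0 ≤ t → 0 ≤ ψ t) ∧ (∀ t, 0 ≤ t → 0 ≤ φ t) ∧
  φ 0 = 0 ∧
  (∀ ε : ℝ, 0 < ε → ψ ε - Function.leftLim ψ ε < φ ε) ∧
  (∀ ε : ℝ, 0 < ε → ∀ t : ℕ → ℝ,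
    Tendsto t atTop (nhds ε) → (∀ᶠ n in atTop, ε < t n) →
    Function.rightLim ψ ε - ψ ε < Filter.limsup (fun n => φ (t n)) atTop)

/-- `T` is `(d,R;G,(ψ,φ))`-contractive. -/
def PsiPhiContractive (R : X → X → Prop) (T : X → X) (G : X → X → ℝ) (ψ φ : ℝ → ℝ) : Prop :=
  ∀ x y, R x y → x ≠ y → ψ (dist (T x) (T y)) ≤ ψ (G x y) - φ (G x y)

/-- `(z_n)` is `R`-ascending. -/
def Ascending (R : X → X → Prop) (z : ℕ → X) : Prop := ∀ n, R (z n) (z (n + 1))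

/-- `(z_n)` is `T`-orbital: a subsequence of `(Tⁿ x)` for some `x`. -/
def Orbital (T : X → X) (z : ℕ → X) : Prop :=
  ∃ x : X, ∃ i : ℕ → ℕ, Tendsto i atTop atTop ∧ ∀ n, z n = T^[i n] x

/-- `X` is `(a-o,d)`-complete. -/
def AOComplete (R : X → X → Prop) (T : X → X) : Prop :=
  ∀ z : ℕ → X, Ascending R z → Orbital T z → CauchySeq z → ∃ l, Tendsto z atTop (nhds l)

/-- `T` is `(a-o,d)`-continuous. -/
def AOContinuous (R : X → X → Prop) (T : X → X) : Prop :=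
  ∀ z : ℕ → X, ∀ l : X, Ascending R z → Orbital T z → Tendsto z atTop (nhds l) →
    Tendsto (fun n => T (z n)) atTop (nhds (T l))

/-- `R` is `(a-o,d)`-almost-selfclosed. -/
def AlmostSelfClosed (R : X → X → Prop) (T : X → X) : Prop :=
  ∀ z : ℕ → X, ∀ l : X, Ascending R z → Orbital T z → Tendsto z atTop (nhds l) →
    ∃ i : ℕ → ℕ, Tendsto i atTop atTop ∧ ∀ n, R (z (i n)) l

/-- the spectrum `spec(x) = {i ≥ 1 : x R Tⁱx}`. -/
def spec (R : X → X → Prop) (T : X → X) (x : X) : Set ℕ := {i | 1 ≤ i ∧ R x (T^[i] x)}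

/-- `R` is `k`-semi-recurrent at `x`. -/
def SemiRecurrentAt (R : X → X → Prop) (T : X → X) (x : X) (k : ℕ) : Prop :=
  ∀ n : ℕ, 1 ≤ n → ∃ q ∈ spec R T x, q ≤ n ∧ n < q + k

/-- `x` is orbital admissible. -/
def OrbAdmissible (T : X → X) (x : X) : Prop :=
  ∀ i j : ℕ, i ≠ j → T^[i] x ≠ T^[j] x

/-- `R` is finitely semi-recurrent. -/
def FinSemiRecurrent (R : X → X → Prop) (T : X → X) : Prop :=
  ∀ x : X, R x (T x) → OrbAdmissible T x → ∃ k : ℕ, 1 ≤ k ∧ SemiRecurrentAt R T x k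

section AuxHelpers

open Function

variable {ψ φ : ℝ → ℝ}

private lemma psiMax_mono (hp : ∀ s t : ℝ, 0 ≤ s → s ≤ t → ψ s ≤ ψ t) :
    Monotone (fun t => ψ (max t 0)) := fun s t h =>
  hp _ _ (le_max_right s 0) (max_le_max h le_rfl)

private lemma leftLim_eq_max (hp : ∀ s t : ℝ, 0 ≤ s → s ≤ t → ψ s ≤ ψ t) {ε : ℝ} (hε : 0 < ε) :
    Function.leftLim ψ ε = Function.leftLim (fun t => ψ (max t 0)) ε := by
  have h1 := (psiMax_mono hp).tendsto_leftLim ε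
  have heq : (fun t => ψ (max t 0)) =ᶠ[𝓝[<] ε] ψ := by
    filter_upwards [eventually_nhdsWithin_of_eventually_nhds (eventually_gt_nhds hε)] with t ht
    simp [max_eq_left ht.le]
  exact leftLim_eq_of_tendsto (h1.congr' heq)

private lemma rightLim_eq_max (hp : ∀ s t : ℝ, 0 ≤ s → s ≤ t → ψ s ≤ ψ t) {ε : ℝ} (hε : 0 < ε) :
    Function.rightLim ψ ε = Function.rightLim (fun t => ψ (max t 0)) ε := by
  have h1 := (psiMax_mono hp).tendsto_rightLim ε
  have heq : (fun t => ψ (max t 0)) =ᶠ[𝓝[>] ε] ψ := by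
    filter_upwards [self_mem_nhdsWithin] with t ht
    simp [max_eq_left (hε.trans ht).le]
  exact rightLim_eq_of_tendsto (h1.congr' heq)

private lemma leftLim_le_self (hp : ∀ s t : ℝ, 0 ≤ s → s ≤ t → ψ s ≤ ψ t) {ε : ℝ} (hε : 0 < ε) :
    Function.leftLim ψ ε ≤ ψ ε := by
  rw [leftLim_eq_max hp hε]
  have := (psiMax_mono hp).leftLim_le (le_refl ε)
  simpa [max_eq_left hε.le] using this

private lemma leftLim_le_of_forall (hp : ∀ s t : ℝ, 0 ≤ s → s ≤ t → ψ s ≤ ψ t) {ε c : ℝ}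
    (hε : 0 < ε) (h : ∀ s, 0 ≤ s → s < ε → ψ s ≤ c) : Function.leftLim ψ ε ≤ c := by
  rw [leftLim_eq_max hp hε]
  refine le_of_tendsto ((psiMax_mono hp).tendsto_leftLim ε) ?_
  filter_upwards [self_mem_nhdsWithin] with t ht
  exact h (max t 0) (le_max_right _ _) (max_lt ht hε)

private lemma self_le_rightLim (hp : ∀ s t : ℝ, 0 ≤ s → s ≤ t → ψ s ≤ ψ t) {ε : ℝ} (hε : 0 < ε) :
    ψ ε ≤ Function.rightLim ψ ε := by
  rw [rightLim_eq_max hp hε]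
  have := (psiMax_mono hp).le_rightLim (le_refl ε)
  simpa [max_eq_left hε.le] using this

private lemma rightLim_le_psi (hp : ∀ s t : ℝ, 0 ≤ s → s ≤ t → ψ s ≤ ψ t) {ε t : ℝ}
    (hε : 0 < ε) (h : ε < t) : Function.rightLim ψ ε ≤ ψ t := by
  rw [rightLim_eq_max hp hε]
  have := (psiMax_mono hp).rightLim_le h
  simpa [max_eq_left (hε.trans h).le] using this

private lemma tendsto_psi_rightLim (hp : ∀ s t : ℝ, 0 ≤ s → s ≤ t → ψ s ≤ ψ t) {ε : ℝ}
    (hε : 0 < ε) {t : ℕ → ℝ} (h1 : Tendsto t atTop (𝓝 ε)) (h2 : ∀ n, ε < t n) :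
    Tendsto (fun n => ψ (t n)) atTop (𝓝 (Function.rightLim ψ ε)) := by
  rw [rightLim_eq_max hp hε]
  have h3 : Tendsto t atTop (𝓝[>] ε) :=
    tendsto_nhdsWithin_of_tendsto_nhds_of_eventually_within _ h1 (Eventually.of_forall h2)
  have h4 := ((psiMax_mono hp).tendsto_rightLim ε).comp h3
  exact h4.congr fun n => by simp [max_eq_left (hε.trans (h2 n)).le]

private lemma calG_facts {X : Type*} [MetricSpace X] {T : X → X} {G : X → X → ℝ}
    (hG : G ∈ calG T) :
    (∀ x y, dist x y ≤ G x y) ∧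
    (∀ x y, G x y ≤ max (A1 T x y) (max (A3 T x y) (A4 T x y))) ∧
    ((∀ x y, G x y ≤ max (A1 T x y) (max (A2 T x y) (A4 T x y))) ∨
      (∀ x y, A3 T x y ≤ G x y)) := by
  have hA2A3 : ∀ x y : X, A2 T x y ≤ A3 T x y := fun x y => by
    have h1 := le_max_left (dist x (T x)) (dist y (T y))
    have h2 := le_max_right (dist x (T x)) (dist y (T y))
    simp only [A2, A3]
    linarith
  simp only [calG, Set.mem_insert_iff, Set.mem_singleton_iff] at hG
  rcases hG with rfl | rfl | rfl | rfl | rfl | rfl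
  · exact ⟨fun x y => le_refl _, fun x y => le_max_left _ _,
      Or.inl fun x y => le_max_left _ _⟩
  · refine ⟨fun x y => le_max_left _ _, fun x y => max_le (le_max_left _ _)
      (((hA2A3 x y).trans (le_max_left _ _)).trans (le_max_right _ _)),
      Or.inl fun x y => max_le_max le_rfl (le_max_left _ _)⟩
  · exact ⟨fun x y => le_max_left _ _, fun x y => max_le (le_max_left _ _)
      (((le_max_left (A3 T x y) (A4 T x y))).trans (le_max_right _ _)),
      Or.inr fun x y => le_max_right _ _⟩
  · exact ⟨fun x y => le_max_left _ _, fun x y => max_le (le_max_left _ _)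
      (((le_max_right (A3 T x y) (A4 T x y))).trans (le_max_right _ _)),
      Or.inl fun x y => max_le_max le_rfl (le_max_right _ _)⟩
  · refine ⟨fun x y => le_max_left _ _, fun x y => max_le (le_max_left _ _)
      (max_le (((hA2A3 x y).trans (le_max_left _ _)).trans (le_max_right _ _))
        (((le_max_right (A3 T x y) (A4 T x y))).trans (le_max_right _ _))),
      Or.inl fun x y => le_rfl⟩
  · exact ⟨fun x y => le_max_left _ _, fun x y => le_rfl,
      Or.inr fun x y => (le_max_left _ _).trans (le_max_right _ _)⟩

end AuxHelpers

/-- main theorem, alternative (iv): `T` `(d,R;G,(ψ,φ))`-contractive for a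
pair of weak generalized altering functions, `X` `(a-o,d)`-complete,
`R` `(a-o,d)`-almost-selfclosed. -/
theorem globally_strong_picard_psiPhi_selfclosed {X : Type*} [MetricSpace X]
    (R : X → X → Prop) (T : X → X)
    (hni : ∃ x y : X, R x y ∧ x ≠ y)
    (hfsr : FinSemiRecurrent R T)
    (hsp : ∃ x : X, R x (T x))
    (hinc : ∀ x y : X, R x y → R (T x) (T y))
    (hcomp : AOComplete R T)
    (G : X → X → ℝ) (hG : G ∈ calG T)
    (ψ φ : ℝ → ℝ) (hpair : WeakAlteringPair ψ φ)
    (hcontr : PsiPhiContractive R T G ψ φ)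
    (hasc : AlmostSelfClosed R T) :
    (∀ x : X, R x (T x) →
      ∃ z : X, T z = z ∧ Tendsto (fun n => T^[n] x) atTop (nhds z)) ∧
    (∀ z₁ z₂ : X, T z₁ = z₁ → T z₂ = z₂ → R z₁ z₂ → z₁ = z₂) := by
  obtain ⟨hmono, hψnn, hφnn, hφ0, hleft, hright⟩ := hpair
  obtain ⟨hGlow, hGup, hGcase⟩ := calG_facts hG
  -- strict nonexpansiveness
  have hstrict : ∀ x y, R x y → x ≠ y → dist (T x) (T y) < G x y := by
    intro x y hR hne
    have hg : 0 < G x y := lt_of_lt_of_le (dist_pos.2 hne) (hGlow x y)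
    have hφg : 0 < φ (G x y) := by
      have h1 := hleft _ hg
      have h2 := leftLim_le_self hmono hg
      linarith
    have hc := hcontr x y hR hne
    by_contra h
    push_neg at h
    have := hmono _ _ hg.le h
    linarith
  -- Meir-Keeler property
  have hMK : ∀ ε : ℝ, 0 < ε → ∃ δ : ℝ, 0 < δ ∧
      ∀ x y, R x y → x ≠ y → G x y < ε + δ → dist (T x) (T y) ≤ ε := by
    intro ε hε
    by_contra h
    push_neg at h
    choose u v hRu hneu hltu hgtu using fun n : ℕ => h (1 / (n + 1 : ℝ)) (by positivity)
    set t : ℕ → ℝ := fun n => G (u n) (v n) with ht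
    have htgt : ∀ n, ε < t n := fun n => lt_trans (hgtu n) (hstrict _ _ (hRu n) (hneu n))
    have htlim : Tendsto t atTop (𝓝 ε) := by
      have hub : Tendsto (fun n : ℕ => ε + 1 / (n + 1 : ℝ)) atTop (𝓝 (ε + 0)) :=
        tendsto_const_nhds.add tendsto_one_div_add_atTop_nhds_zero_nat
      rw [add_zero] at hub
      exact tendsto_of_tendsto_of_tendsto_of_le_of_le tendsto_const_nhds hub
        (fun n => (htgt n).le) (fun n => (hltu n).le)
    have hφt0 : Tendsto (fun n => φ (t n)) atTop (𝓝 0) := by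
      have hub : ∀ n, φ (t n) ≤ ψ (t n) - Function.rightLim ψ ε := by
        intro n
        have hc := hcontr _ _ (hRu n) (hneu n)
        have h2 : Function.rightLim ψ ε ≤ ψ (dist (T (u n)) (T (v n))) :=
          rightLim_le_psi hmono hε (hgtu n)
        linarith
      have hg0 : Tendsto (fun n => ψ (t n) - Function.rightLim ψ ε) atTop (𝓝 0) := by
        have := (tendsto_psi_rightLim hmono hε htlim htgt).sub_const (Function.rightLim ψ ε)
        simpa using this
      exact squeeze_zero (fun n => hφnn _ (lt_trans hε (htgt n)).le) hub hg0
    have hls := hright ε hε t htlim (Eventually.of_forall htgt)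
    rw [hφt0.limsup_eq] at hls
    have := self_le_rightLim hmono hε
    linarith
  constructor
  · -- Picard part
    intro x hx
    obtain ⟨o, ho⟩ : ∃ o : ℕ → X, ∀ n, o n = T^[n] x := ⟨_, fun _ => rfl⟩
    have hT : ∀ n, T (o n) = o (n + 1) := by
      intro n
      rw [ho n, ho (n + 1)]
      exact (Function.iterate_succ_apply' T n x).symm
    have hgoal : ∀ l : X, Tendsto o atTop (𝓝 l) → Tendsto (fun n => T^[n] x) atTop (𝓝 l) := by
      intro l hl
      have : (fun n => T^[n] x) = o := funext fun n => (ho n).symm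
      rw [this]; exact hl
    have hoasc : Ascending R o := by
      intro n
      induction n with
      | zero => rw [← hT 0, ho 0]; simpa using hx
      | succ n ih => rw [← hT n, ← hT (n + 1)]; exact hinc _ _ ih
    have horb : Orbital T o := ⟨x, id, tendsto_id, fun n => ho n⟩
    by_cases hfix : ∃ n, T (o n) = o n
    · obtain ⟨n, hn⟩ := hfix
      refine ⟨o n, hn, hgoal _ ?_⟩
      have hconst : ∀ m, n ≤ m → o m = o n := by
        intro m hm
        induction m, hm using Nat.le_induction with
        | base => rfl
        | succ m hm ih => rw [← hT m, ih, hn]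
      refine Tendsto.congr' ?_ tendsto_const_nhds
      filter_upwards [eventually_ge_atTop n] with m hm
      exact (hconst m hm).symm
    · push_neg at hfix
      have hne : ∀ n, o n ≠ o (n + 1) := fun n h => hfix n (by rw [hT n]; exact h.symm)
      obtain ⟨r, hrn⟩ : ∃ r : ℕ → ℝ, ∀ n, r n = dist (o n) (o (n + 1)) := ⟨_, fun _ => rfl⟩
      have hrpos : ∀ n, 0 < r n := fun n => (hrn n) ▸ dist_pos.2 (hne n)
      have hGconsup : ∀ n, G (o n) (o (n + 1)) ≤ max (r n) (r (n + 1)) := by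
        intro n
        refine (hGup _ _).trans ?_
        have hA1 : A1 T (o n) (o (n + 1)) = r n := (hrn n).symm
        have hA3 : A3 T (o n) (o (n + 1)) = max (r n) (r (n + 1)) := by
          show max (dist (o n) (T (o n))) (dist (o (n + 1)) (T (o (n + 1)))) = _
          rw [hT n, hT (n + 1), ← hrn n, ← hrn (n + 1)]
        have hA4 : A4 T (o n) (o (n + 1)) ≤ (r n + r (n + 1)) / 2 := by
          show (dist (o n) (T (o (n + 1))) + dist (T (o n)) (o (n + 1))) / 2 ≤ _
          rw [hT n, hT (n + 1)]
          have h1 : dist (o n) (o (n + 1 + 1)) ≤ r n + r (n + 1) := by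
            rw [hrn n, hrn (n + 1)]; exact dist_triangle _ _ _
          have h2 : dist (o (n + 1)) (o (n + 1)) = 0 := dist_self _
          rw [h2]
          linarith
        rw [hA1, hA3]
        have havg : (r n + r (n + 1)) / 2 ≤ max (r n) (r (n + 1)) := by
          have h1 := le_max_left (r n) (r (n + 1))
          have h2 := le_max_right (r n) (r (n + 1))
          linarith
        exact max_le (le_max_left _ _) (max_le le_rfl (hA4.trans havg))
      have hrdec : ∀ n, r (n + 1) < r n := by
        intro n
        have h1 : dist (T (o n)) (T (o (n + 1))) < G (o n) (o (n + 1)) :=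
          hstrict _ _ (hoasc n) (hne n)
        rw [hT n, hT (n + 1), ← hrn (n + 1)] at h1
        have h2 : r (n + 1) < max (r n) (r (n + 1)) := lt_of_lt_of_le h1 (hGconsup n)
        rcases max_cases (r n) (r (n + 1)) with ⟨hm, _⟩ | ⟨hm, _⟩
        · rwa [hm] at h2
        · rw [hm] at h2; exact absurd h2 (lt_irrefl _)
      have hGcons : ∀ n, G (o n) (o (n + 1)) = r n := fun n =>
        le_antisymm ((hGconsup n).trans_eq (max_eq_left (hrdec n).le))
          ((hrn n) ▸ hGlow (o n) (o (n + 1)))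
      have hranti : StrictAnti r := strictAnti_nat_of_succ_lt hrdec
      have hadm : OrbAdmissible T x := by
        have key : ∀ i j : ℕ, i < j → T^[i] x ≠ T^[j] x := by
          intro i j hij h
          have h' : o i = o j := by rw [ho i, ho j]; exact h
          have hrij : r i = r j := by
            rw [hrn i, hrn j, ← hT i, ← hT j, h']
          exact absurd hrij (ne_of_gt (hranti hij))
        intro i j hij
        rcases hij.lt_or_gt with h | h
        · exact key i j h
        · exact fun he => key j i h he.symm
      have hrbdd : BddBelow (Set.range r) := ⟨0, by rintro y ⟨n, rfl⟩; exact (hrpos n).le⟩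
      have hrlim : Tendsto r atTop (𝓝 (⨅ n, r n)) := tendsto_atTop_ciInf hranti.antitone hrbdd
      have hinf0 : (⨅ n, r n) = 0 := by
        by_contra hne0
        have hL0 : 0 ≤ ⨅ n, r n := le_ciInf fun n => (hrpos n).le
        have hLpos : 0 < ⨅ n, r n := hL0.lt_of_ne (Ne.symm hne0)
        have hψdec : ∀ n, ψ (r (n + 1)) ≤ ψ (r n) - φ (r n) := by
          intro n
          have hc := hcontr (o n) (o (n + 1)) (hoasc n) (hne n)
          rw [hT n, hT (n + 1), ← hrn (n + 1), hGcons n] at hc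
          exact hc
        have hψanti : Antitone (fun n => ψ (r n)) := antitone_nat_of_succ_le fun n => by
          have := hφnn (r n) (hrpos n).le
          linarith [hψdec n]
        have hψbdd : BddBelow (Set.range fun n => ψ (r n)) :=
          ⟨0, by rintro y ⟨n, rfl⟩; exact hψnn _ (hrpos n).le⟩
        have hψlim : Tendsto (fun n => ψ (r n)) atTop (𝓝 (⨅ n, ψ (r n))) :=
          tendsto_atTop_ciInf hψanti hψbdd
        have hφr0 : Tendsto (fun n => φ (r n)) atTop (𝓝 0) := by
          have h2 : Tendsto (fun n => ψ (r (n + 1))) atTop (𝓝 (⨅ n, ψ (r n))) :=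
            hψlim.comp (tendsto_add_atTop_nat 1)
          have hsub : Tendsto (fun n => ψ (r n) - ψ (r (n + 1))) atTop (𝓝 0) := by
            have := hψlim.sub h2
            simpa using this
          exact squeeze_zero (fun n => hφnn _ (hrpos n).le)
            (fun n => by linarith [hψdec n]) hsub
        have hgtL : ∀ n, (⨅ n, r n) < r n := fun n =>
          lt_of_le_of_lt (ciInf_le hrbdd (n + 1)) (hrdec n)
        have hls := hright _ hLpos r hrlim (Eventually.of_forall hgtL)
        rw [hφr0.limsup_eq] at hls
        have := self_le_rightLim hmono hLpos
        linarith
      rw [hinf0] at hrlim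
      have hr0 : Tendsto r atTop (𝓝 0) := hrlim
      obtain ⟨k, hk1, hkrec⟩ := hfsr x (by simpa using hx) hadm
      have hkR : (1 : ℝ) ≤ (k : ℝ) := by exact_mod_cast hk1
      have hshift : ∀ m q, R x (T^[q] x) → R (o m) (o (m + q)) := by
        intro m q hq
        induction m with
        | zero =>
          rw [ho 0, ho (0 + q)]
          simpa using hq
        | succ m ih =>
          have h2 := hinc _ _ ih
          rw [hT m, hT (m + q)] at h2
          have h3 : m + 1 + q = m + q + 1 := by omega
          rw [h3]
          exact h2
      have hcauchy : CauchySeq o := by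
        rw [Metric.cauchySeq_iff]
        intro ep hep
        obtain ⟨δ₀, hδ₀, hMKe⟩ := hMK (ep / 2) (by linarith)
        set δ := min δ₀ (ep / 2) with hδdef
        have hδpos : 0 < δ := lt_min hδ₀ (by linarith)
        have hδle : δ ≤ δ₀ := min_le_left _ _
        have hδle2 : δ ≤ ep / 2 := min_le_right _ _
        set B := δ / (2 * k) with hBdef
        have hk0 : (0 : ℝ) < (k : ℝ) := by linarith
        have hBpos : 0 < B := div_pos hδpos (by linarith)
        have hkB : (k : ℝ) * B = δ / 2 := by
          rw [hBdef]; field_simp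
        have hBhalf : B ≤ δ / 2 := by
          rw [← hkB]
          nlinarith
        obtain ⟨N, hN⟩ := Metric.tendsto_atTop.mp hr0 B hBpos
        have hNr : ∀ n, N ≤ n → r n < B := by
          intro n hn
          have := hN n hn
          rw [Real.dist_eq, sub_zero, abs_of_nonneg (hrpos n).le] at this
          exact this
        have hchain : ∀ a c, N ≤ a → dist (o a) (o (a + c)) ≤ (c : ℝ) * B := by
          intro a c ha
          induction c with
          | zero => simp
          | succ c ih =>
            have h1 : dist (o a) (o (a + (c + 1))) ≤ dist (o a) (o (a + c)) + r (a + c) := by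
              have h2 := dist_triangle (o a) (o (a + c)) (o (a + c + 1))
              rw [← hrn (a + c)] at h2
              have h3 : a + (c + 1) = a + c + 1 := by omega
              rw [h3]
              exact h2
            have h2 := hNr (a + c) (by omega)
            push_cast
            nlinarith
        have claim : ∀ p, 1 ≤ p → ∀ m, N ≤ m → dist (o m) (o (m + p)) ≤ ep / 2 + δ / 2 := by
          intro p
          induction p using Nat.strong_induction_on with
          | _ p IH =>
            intro hp m hm
            rcases Nat.lt_or_ge p 2 with hp2 | hp2
            · have hp1 : p = 1 := by omega
              subst hp1
              have := hNr m hm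
              rw [← hrn m]
              linarith
            · obtain ⟨q, hqspec, hqle, hqlt⟩ := hkrec (p - 1) (by omega)
              obtain ⟨hq1, hqR⟩ := hqspec
              have hq_lt_p : q < p := by omega
              have hq1p : q + 1 ≤ p := by omega
              have hRmq : R (o m) (o (m + q)) := hshift m q hqR
              have hnemq : o m ≠ o (m + q) := by
                rw [ho m, ho (m + q)]
                exact hadm m (m + q) (by omega)
              have hIHq : dist (o m) (o (m + q)) ≤ ep / 2 + δ / 2 := IH q hq_lt_p hq1 m hm
              have hrm := hNr m hm
              have hrmq := hNr (m + q) (by omega)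
              have hGlt : G (o m) (o (m + q)) < ep / 2 + δ := by
                refine lt_of_le_of_lt (hGup _ _) ?_
                have hA1 : A1 T (o m) (o (m + q)) ≤ ep / 2 + δ / 2 := hIHq
                have hA3 : A3 T (o m) (o (m + q)) < B := by
                  show max (dist (o m) (T (o m))) (dist (o (m + q)) (T (o (m + q)))) < B
                  rw [hT m, hT (m + q), ← hrn m, ← hrn (m + q)]
                  exact max_lt hrm hrmq
                have hA4 : A4 T (o m) (o (m + q)) < ep / 2 + δ / 2 + B := by
                  show (dist (o m) (T (o (m + q))) + dist (T (o m)) (o (m + q))) / 2 < _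
                  rw [hT m, hT (m + q)]
                  have h1 : dist (o m) (o (m + q + 1)) ≤ dist (o m) (o (m + q)) + r (m + q) := by
                    have := dist_triangle (o m) (o (m + q)) (o (m + q + 1))
                    rw [← hrn (m + q)] at this
                    exact this
                  have h2 : dist (o (m + 1)) (o (m + q)) ≤ r m + dist (o m) (o (m + q)) := by
                    have := dist_triangle (o (m + 1)) (o m) (o (m + q))
                    rw [dist_comm (o (m + 1)) (o m), ← hrn m] at this
                    exact this
                  linarith
                have hBlt : B < ep / 2 + δ := by linarith
                exact max_lt (by linarith) (max_lt (by linarith) (by linarith))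
              have hstepMK : dist (o (m + 1)) (o (m + q + 1)) ≤ ep / 2 := by
                have := hMKe (o m) (o (m + q)) hRmq hnemq (hGlt.trans_le (by linarith))
                rwa [hT m, hT (m + q)] at this
              have hlast : dist (o (m + q + 1)) (o (m + p)) ≤ ((p - (q + 1) : ℕ) : ℝ) * B := by
                have := hchain (m + q + 1) (p - (q + 1)) (by omega)
                rwa [show m + q + 1 + (p - (q + 1)) = m + p from by omega] at this
              have htail : ((p - (q + 1) : ℕ) : ℝ) ≤ (k : ℝ) - 1 := by
                have h1 : p - (q + 1) ≤ k - 1 := by omega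
                calc ((p - (q + 1) : ℕ) : ℝ) ≤ ((k - 1 : ℕ) : ℝ) := by exact_mod_cast h1
                  _ = (k : ℝ) - 1 := by
                    rw [Nat.cast_sub hk1]; norm_num
              have h4 := dist_triangle4 (o m) (o (m + 1)) (o (m + q + 1)) (o (m + p))
              have hrm' : dist (o m) (o (m + 1)) < B := by rw [← hrn m]; exact hrm
              have hmul := mul_le_mul_of_nonneg_right htail hBpos.le
              linarith
        refine ⟨N, fun m hm n hn => ?_⟩
        have key : ∀ a b : ℕ, N ≤ a → a ≤ b → dist (o a) (o b) < ep := by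
          intro a b ha hab
          rcases Nat.eq_or_lt_of_le hab with rfl | hlt
          · rw [dist_self]; exact hep
          · have h1 := claim (b - a) (by omega) a ha
            rw [show a + (b - a) = b from by omega] at h1
            linarith
        rcases le_total m n with h | h
        · exact key m n hm h
        · rw [dist_comm]; exact key n m hn h
      obtain ⟨l, hl⟩ := hcomp o hoasc horb hcauchy
      refine ⟨l, ?_, hgoal _ hl⟩
      by_contra hTl
      have hlne : l ≠ T l := fun h => hTl h.symm
      have hρ : 0 < dist l (T l) := dist_pos.2 hlne
      set ρ := dist l (T l) with hρdef
      obtain ⟨is, his, hisR⟩ := hasc o l hoasc horb hl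
      have pick : ∀ η, 0 < η →
          ∃ j, R (o j) l ∧ dist (o j) l < η ∧ r j < η ∧ dist (o (j + 1)) l < η := by
        intro η hη
        obtain ⟨N₁, hN₁⟩ := Metric.tendsto_atTop.mp hl η hη
        obtain ⟨N₂, hN₂⟩ := Metric.tendsto_atTop.mp hr0 η hη
        obtain ⟨n₀, hn₀⟩ := (his.eventually_ge_atTop (max N₁ N₂)).exists
        have h1 : N₁ ≤ is n₀ := le_trans (le_max_left _ _) hn₀
        have h2 : N₂ ≤ is n₀ := le_trans (le_max_right _ _) hn₀
        refine ⟨is n₀, hisR n₀, hN₁ _ h1, ?_, hN₁ _ (by omega)⟩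
        have := hN₂ _ h2
        rw [Real.dist_eq, sub_zero, abs_of_nonneg (hrpos _).le] at this
        exact this
      have hfixdone : ∀ j, o j = l → r j < ρ / 8 → False := by
        intro j hje hjr
        have h1 : T l = o (j + 1) := by rw [← hje]; exact hT j
        have h2 : ρ = r j := by rw [hρdef, h1, ← hje]; exact (hrn j).symm
        linarith
      rcases hGcase with hGa | hGb
      · obtain ⟨j, hjR, hjl, hjr, hjl1⟩ := pick (ρ / 8) (by linarith)
        by_cases hje : o j = l
        · exact hfixdone j hje hjr
        · have h1 : dist (T (o j)) (T l) < G (o j) l := hstrict _ _ hjR hje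
          rw [hT j] at h1
          have hup := hGa (o j) l
          have hA2 : A2 T (o j) l = (r j + ρ) / 2 := by
            show (dist (o j) (T (o j)) + dist l (T l)) / 2 = _
            rw [hT j, ← hrn j, ← hρdef]
          have hA4 : A4 T (o j) l ≤ (dist (o j) l + ρ + dist (o (j + 1)) l) / 2 := by
            show (dist (o j) (T l) + dist (T (o j)) l) / 2 ≤ _
            rw [hT j]
            have t1 : dist (o j) (T l) ≤ dist (o j) l + ρ := by
              rw [hρdef]; exact dist_triangle _ _ _
            linarith
          have hGsmall : G (o j) l < 3 / 4 * ρ := by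
            refine lt_of_le_of_lt hup (max_lt ?_ (max_lt ?_ ?_))
            · show dist (o j) l < 3 / 4 * ρ
              linarith
            · rw [hA2]; linarith
            · exact lt_of_le_of_lt hA4 (by linarith)
          have hd : ρ - dist (o (j + 1)) l ≤ dist (o (j + 1)) (T l) := by
            have := dist_triangle l (o (j + 1)) (T l)
            rw [dist_comm l (o (j + 1))] at this
            rw [hρdef]
            linarith
          linarith
      · have key : ∀ s, 0 ≤ s → s < ρ → ψ s ≤ ψ ρ - φ ρ := by
          intro s hs0 hsρ
          obtain ⟨j, hjR, hjl, hjr, hjl1⟩ :=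
            pick (min (ρ / 8) (ρ - s)) (lt_min (by linarith) (by linarith))
          have hjl8 : dist (o j) l < ρ / 8 := lt_of_lt_of_le hjl (min_le_left _ _)
          have hjr8 : r j < ρ / 8 := lt_of_lt_of_le hjr (min_le_left _ _)
          have hjl18 : dist (o (j + 1)) l < ρ / 8 := lt_of_lt_of_le hjl1 (min_le_left _ _)
          have hjl1s : dist (o (j + 1)) l < ρ - s := lt_of_lt_of_le hjl1 (min_le_right _ _)
          by_cases hje : o j = l
          · exact absurd (hfixdone j hje hjr8) (fun h => h)
          · have hGeq : G (o j) l = ρ := by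
              apply le_antisymm
              · refine (hGup _ _).trans (max_le ?_ (max_le ?_ ?_))
                · show dist (o j) l ≤ ρ
                  linarith
                · show max (dist (o j) (T (o j))) (dist l (T l)) ≤ ρ
                  rw [hT j, ← hrn j, ← hρdef]
                  exact max_le (by linarith) le_rfl
                · show (dist (o j) (T l) + dist (T (o j)) l) / 2 ≤ ρ
                  rw [hT j]
                  have t1 : dist (o j) (T l) ≤ dist (o j) l + ρ := by
                    rw [hρdef]; exact dist_triangle _ _ _
                  linarith
              · refine le_trans ?_ (hGb (o j) l)
                show ρ ≤ max (dist (o j) (T (o j))) (dist l (T l))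
                rw [← hρdef]
                exact le_max_right _ _
            have hc := hcontr (o j) l hjR hje
            rw [hGeq, hT j] at hc
            have hd : s ≤ dist (o (j + 1)) (T l) := by
              have := dist_triangle l (o (j + 1)) (T l)
              rw [dist_comm l (o (j + 1))] at this
              rw [hρdef] at hjl1s
              linarith
            exact le_trans (hmono s _ hs0 hd) hc
        have h1 : Function.leftLim ψ ρ ≤ ψ ρ - φ ρ := leftLim_le_of_forall hmono hρ key
        have h2 := hleft ρ hρ
        linarith
  · -- uniqueness part
    intro z₁ z₂ h1 h2 hR12
    by_contra hne12
    have h := hstrict z₁ z₂ hR12 hne12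
    rw [h1, h2] at h
    have h3 := hGup z₁ z₂
    have hA3 : A3 T z₁ z₂ = 0 := by
      show max (dist z₁ (T z₁)) (dist z₂ (T z₂)) = 0
      rw [h1, h2, dist_self, dist_self, max_self]
    have hA4 : A4 T z₁ z₂ = dist z₁ z₂ := by
      show (dist z₁ (T z₂) + dist (T z₁) z₂) / 2 = dist z₁ z₂
      rw [h1, h2]
      ring
    have hA1 : A1 T z₁ z₂ = dist z₁ z₂ := rfl
    rw [hA1, hA3, hA4] at h3
    have h4 : max (dist z₁ z₂) (max 0 (dist z₁ z₂)) = dist z₁ z₂ := by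
      rw [max_comm (0 : ℝ), max_eq_left dist_nonneg, max_self]
    rw [h4] at h3
    linarith

end Paper
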